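/- Let Γ = ℤ/sℤ with s ≥ 2 and let I = {(i,i) : i ∈ Γ} ∪ {(i,i+1) : i ∈ Γ} ⊆ Γ × Γ. Then the bipartite graph associated to I is a single cycle of length 2s, and it contains no cycle of length 2l for any 2 ≤ l ≤ s - 1. -/

import Mathlib

open SimpleGraph

/-- The bipartite graph on `R ⊕ C` associated to a set of couples `I ⊆ R × C`. -/
def bipartiteGraph {R C : Type*} (I : Set (R × C)) : SimpleGraph (R ⊕ C) where
  Adj x y := ∃ r c, (r, c) ∈ I ∧
    ((x = Sum.inl r ∧ y = Sum.inr c) ∨ (x = Sum.inr c ∧ y = Sum.inl r))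
  symm := by constructor; rintro x y ⟨r, c, h, h'⟩; exact ⟨r, c, h, h'.symm.imp And.symm And.symm⟩
  loopless := by constructor; rintro x ⟨r, c, h, ⟨h1, h2⟩ | ⟨h1, h2⟩⟩ <;> simp_all

/-- Walk built from a sequence of pairwise-adjacent vertices. -/
def walkOf {V' : Type*} {G' : SimpleGraph V'} (f : ℕ → V') (hf : ∀ m, G'.Adj (f m) (f (m+1))) :
    (a n : ℕ) → G'.Walk (f a) (f (a + n))
  | _, 0 => Walk.nil
  | a, n+1 => Walk.cons (hf a) ((walkOf f hf (a+1) n).copy rfl (congrArg f (by omega)))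

@[simp] lemma walkOf_length {V' : Type*} {G' : SimpleGraph V'} (f : ℕ → V')
    (hf : ∀ m, G'.Adj (f m) (f (m+1))) (a n : ℕ) : (walkOf f hf a n).length = n := by
  induction n generalizing a with
  | zero => rfl
  | succ n ih => simp [walkOf, ih]

lemma walkOf_support {V' : Type*} {G' : SimpleGraph V'} (f : ℕ → V')
    (hf : ∀ m, G'.Adj (f m) (f (m+1))) (a n : ℕ) :
    (walkOf f hf a n).support = (List.range (n+1)).map (fun i => f (a+i)) := by
  induction n generalizing a with
  | zero => simp [walkOf, List.range_succ]
  | succ n ih =>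
    rw [walkOf]
    simp only [Walk.support_cons, Walk.support_copy, ih]
    rw [List.range_succ_eq_map (n := n+1)]
    simp only [List.map_cons, List.map_map, Function.comp_def, Nat.add_zero, List.cons.injEq]
    refine ⟨trivial, List.map_congr_left fun i _ => congrArg f (by omega)⟩

lemma walkOf_edges {V' : Type*} {G' : SimpleGraph V'} (f : ℕ → V')
    (hf : ∀ m, G'.Adj (f m) (f (m+1))) (a n : ℕ) :
    (walkOf f hf a n).edges = (List.range n).map (fun i => s(f (a+i), f (a+i+1))) := by
  induction n generalizing a with
  | zero => simp [walkOf]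
  | succ n ih =>
    rw [walkOf]
    simp only [Walk.edges_cons, Walk.edges_copy, ih]
    rw [List.range_succ_eq_map (n := n)]
    simp only [List.map_cons, List.map_map, Function.comp_def, Nat.add_zero, List.cons.injEq]
    refine ⟨trivial, List.map_congr_left fun i _ => ?_⟩
    rw [show a + 1 + i = a + (i+1) from by omega, show a + (i+1) + 1 = a + (i+1) + 1 from rfl]

lemma walk_support_getElem {V' : Type*} {G' : SimpleGraph V'} {u v : V'} (p : G'.Walk u v)
    (i : ℕ) (hi : i < p.support.length) : p.support[i] = p.getVert i := by
  induction p generalizing i with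
  | nil =>
    simp only [Walk.support_nil, List.length_singleton] at hi
    interval_cases i
    simp
  | cons h q ih =>
    cases i with
    | zero => simp
    | succ i =>
      simp only [Walk.support_cons, List.getElem_cons_succ, Walk.getVert_cons_succ]
      exact ih i (by simpa using hi)

section Aux
variable (s : ℕ)

/-- natural cast to `ZMod s` is "injective" on `[0, s]` up to identifying `0` and `s`. -/
lemma castInj' (a b : ℕ) (ha : a ≤ s) (hb : b ≤ s) (h : (a : ZMod s) = (b : ZMod s)) :
    a = b ∨ (a = 0 ∧ b = s) ∨ (a = s ∧ b = 0) := by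
  have h' : a % s = b % s := (ZMod.natCast_eq_natCast_iff a b s).mp h
  have ea : a % s = a ∨ (a = s ∧ a % s = 0) := by
    rcases Nat.lt_or_ge a s with h1 | h1
    · exact Or.inl (Nat.mod_eq_of_lt h1)
    · have : a = s := by omega
      exact Or.inr ⟨this, by simp [this]⟩
  have eb : b % s = b ∨ (b = s ∧ b % s = 0) := by
    rcases Nat.lt_or_ge b s with h1 | h1
    · exact Or.inl (Nat.mod_eq_of_lt h1)
    · have : b = s := by omega
      exact Or.inr ⟨this, by simp [this]⟩
  omega

def Vv (m : ℕ) : ZMod s ⊕ ZMod s :=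
  if m % 2 = 0 then Sum.inl ((m/2 : ℕ) : ZMod s) else Sum.inr (((m+1)/2 : ℕ) : ZMod s)

lemma Vv_even {m : ℕ} (h : m % 2 = 0) : Vv s m = Sum.inl ((m/2 : ℕ) : ZMod s) := if_pos h
lemma Vv_odd {m : ℕ} (h : m % 2 = 1) : Vv s m = Sum.inr (((m+1)/2 : ℕ) : ZMod s) :=
  if_neg (by omega)

lemma Vv_two_mul (k : ℕ) : Vv s (2*k) = Sum.inl ((k : ℕ) : ZMod s) := by
  have h2 : 2*k/2 = k := by omega
  rw [Vv_even _ (by omega), h2]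

lemma Vv_two_mul_add_one (k : ℕ) : Vv s (2*k+1) = Sum.inr (((k+1 : ℕ)) : ZMod s) := by
  have h2 : (2*k+1+1)/2 = k+1 := by omega
  rw [Vv_odd _ (by omega), h2]

lemma Iset_mem (r c : ZMod s) :
    (r, c) ∈ ({p : ZMod s × ZMod s | p.2 = p.1} ∪ {p : ZMod s × ZMod s | p.2 = p.1 + 1})
      ↔ c = r ∨ c = r + 1 := by
  simp [Set.mem_union, Set.mem_setOf_eq]

lemma adj_cases {x y : ZMod s ⊕ ZMod s}
    (h : (bipartiteGraph ({p : ZMod s × ZMod s | p.2 = p.1} ∪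
      {p : ZMod s × ZMod s | p.2 = p.1 + 1})).Adj x y) :
    ∃ r : ZMod s, (x = .inl r ∧ y = .inr r) ∨ (x = .inl r ∧ y = .inr (r+1)) ∨
      (x = .inr r ∧ y = .inl r) ∨ (x = .inr (r+1) ∧ y = .inl r) := by
  obtain ⟨r, c, hc, ⟨h1, h2⟩ | ⟨h1, h2⟩⟩ := h <;> rw [Iset_mem] at hc <;>
    rcases hc with rfl | rfl
  · exact ⟨c, Or.inl ⟨h1, h2⟩⟩
  · exact ⟨r, Or.inr (Or.inl ⟨h1, h2⟩)⟩
  · exact ⟨c, Or.inr (Or.inr (Or.inl ⟨h1, h2⟩))⟩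
  · exact ⟨r, Or.inr (Or.inr (Or.inr ⟨h1, h2⟩))⟩

lemma adj_Vv (m : ℕ) :
    (bipartiteGraph ({p : ZMod s × ZMod s | p.2 = p.1} ∪
      {p : ZMod s × ZMod s | p.2 = p.1 + 1})).Adj (Vv s m) (Vv s (m+1)) := by
  rcases Nat.even_or_odd m with ⟨j, hj⟩ | ⟨j, hj⟩
  · subst hj
    rw [show j + j = 2*j from by omega, Vv_two_mul, show 2*j+1 = 2*j+1 from rfl,
      Vv_two_mul_add_one]
    refine ⟨(j : ZMod s), ((j : ℕ) : ZMod s) + 1, (Iset_mem s _ _).mpr (Or.inr rfl),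
      Or.inl ⟨rfl, ?_⟩⟩
    push_cast
    rfl
  · subst hj
    rw [show 2*j+1+1 = 2*(j+1) from by omega, Vv_two_mul_add_one, Vv_two_mul]
    exact ⟨((j+1 : ℕ) : ZMod s), ((j+1 : ℕ) : ZMod s), (Iset_mem s _ _).mpr (Or.inl rfl),
      Or.inr ⟨rfl, rfl⟩⟩

lemma Vv_inj {m m' : ℕ} (hm : m ≤ 2*s) (hm' : m' ≤ 2*s) (h : Vv s m = Vv s m') :
    m = m' ∨ (m = 0 ∧ m' = 2*s) ∨ (m = 2*s ∧ m' = 0) := by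
  rcases Nat.mod_two_eq_zero_or_one m with h1 | h1 <;>
    rcases Nat.mod_two_eq_zero_or_one m' with h2 | h2
  · rw [Vv_even _ h1, Vv_even _ h2] at h
    have := castInj' s (m/2) (m'/2) (by omega) (by omega) (Sum.inl.inj h)
    omega
  · rw [Vv_even _ h1, Vv_odd _ h2] at h
    exact absurd h (by simp)
  · rw [Vv_odd _ h1, Vv_even _ h2] at h
    exact absurd h (by simp)
  · rw [Vv_odd _ h1, Vv_odd _ h2] at h
    have := castInj' s ((m+1)/2) ((m'+1)/2) (by omega) (by omega) (Sum.inr.inj h)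
    omega


def phiz (i : ZMod s) : ZMod (2*s) := ((2 * i.val : ℕ) : ZMod (2*s))

def gg : ZMod s ⊕ ZMod s → ZMod (2*s)
  | .inl i => phiz s i
  | .inr j => phiz s j - 1

variable {s}

lemma two_mod_cast (x : ℕ) : ((2 * (x % s) : ℕ) : ZMod (2*s)) = ((2 * x : ℕ) : ZMod (2*s)) := by
  conv_rhs => rw [show 2*x = 2*s*(x/s) + 2*(x%s) from by
    rw [mul_assoc, ← Nat.mul_add, Nat.div_add_mod]]
  push_cast
  have h0 : (2 : ZMod (2*s)) * (s : ZMod (2*s)) = 0 := by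
    have h1 := ZMod.natCast_self (2*s)
    push_cast at h1
    linear_combination h1
  rw [mul_assoc 2 (s : ZMod (2*s)), ← mul_assoc, h0]
  ring

lemma phiz_add_one (hs : 2 ≤ s) (i : ZMod s) : phiz s (i+1) = phiz s i + 2 := by
  haveI : NeZero s := ⟨by omega⟩
  haveI : Fact (1 < s) := ⟨by omega⟩
  unfold phiz
  rw [ZMod.val_add, ZMod.val_one, two_mod_cast]
  push_cast
  ring

lemma phiz_inj (hs : 2 ≤ s) {i j : ZMod s} (h : phiz s i = phiz s j) : i = j := by
  haveI : NeZero s := ⟨by omega⟩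
  have h1 := congrArg ZMod.val h
  unfold phiz at h1
  rw [ZMod.val_cast_of_lt (by have := ZMod.val_lt i; omega),
    ZMod.val_cast_of_lt (by have := ZMod.val_lt j; omega)] at h1
  exact ZMod.val_injective s (by omega)

lemma phiz_ne (hs : 2 ≤ s) (i j : ZMod s) : phiz s i ≠ phiz s j - 1 := by
  intro h
  have h2 := congrArg (ZMod.castHom (dvd_mul_right 2 s) (ZMod 2)) h
  simp only [phiz, map_natCast, map_sub, map_one] at h2
  rw [Nat.cast_mul, Nat.cast_mul] at h2
  simp only [Nat.cast_ofNat] at h2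
  have : (2 : ZMod 2) = 0 := by decide
  rw [this, zero_mul, zero_mul] at h2
  revert h2
  decide

lemma gg_inj (hs : 2 ≤ s) : Function.Injective (gg s) := by
  intro x y h
  match x, y with
  | .inl i, .inl j =>
    simp only [gg] at h
    exact congrArg Sum.inl (phiz_inj hs h)
  | .inl i, .inr j =>
    simp only [gg] at h
    exact absurd h (phiz_ne hs i j)
  | .inr i, .inl j =>
    simp only [gg] at h
    exact absurd h.symm (phiz_ne hs j i)
  | .inr i, .inr j =>
    simp only [gg] at h
    exact congrArg Sum.inr (phiz_inj hs (sub_left_inj.mp h))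

lemma gg_adj (hs : 2 ≤ s) {x y : ZMod s ⊕ ZMod s}
    (h : (bipartiteGraph ({p : ZMod s × ZMod s | p.2 = p.1} ∪
      {p : ZMod s × ZMod s | p.2 = p.1 + 1})).Adj x y) :
    gg s y - gg s x = 1 ∨ gg s y - gg s x = -1 := by
  obtain ⟨r, hc⟩ := adj_cases s h
  rcases hc with ⟨rfl, rfl⟩ | ⟨rfl, rfl⟩ | ⟨rfl, rfl⟩ | ⟨rfl, rfl⟩ <;>
    simp only [gg, phiz_add_one hs] <;> [right; left; left; right] <;> ring

/-- For `Γ = ℤ/sℤ` with `s ≥ 2` and `I = {(i,i)} ∪ {(i,i+1)}`, the associated bipartite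
graph is a single cycle of length `2s` (a cycle of length `2s` passing through every
edge), and it contains no cycle of length `2l` for any `2 ≤ l ≤ s - 1`. -/
theorem zmod_bipartite_cycle (s : ℕ) (hs : 2 ≤ s)
    (I : Set (ZMod s × ZMod s))
    (hI : I = {p : ZMod s × ZMod s | p.2 = p.1} ∪ {p : ZMod s × ZMod s | p.2 = p.1 + 1}) :
    (∃ (v : ZMod s ⊕ ZMod s) (c : (bipartiteGraph I).Walk v v), c.IsCycle ∧
      c.length = 2 * s ∧
      ∀ e, e ∈ (bipartiteGraph I).edgeSet ↔ e ∈ c.edges) ∧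
    ∀ l, 2 ≤ l → l ≤ s - 1 →
      ¬ ∃ (v : ZMod s ⊕ ZMod s) (c : (bipartiteGraph I).Walk v v),
        c.IsCycle ∧ c.length = 2 * l := by
  subst hI
  haveI : NeZero s := ⟨by omega⟩
  constructor
  · -- Existence of the long cycle
    have h0 : Vv s 0 = Sum.inl (0 : ZMod s) := by simpa using Vv_two_mul s 0
    have hend : Vv s (0 + 2*s) = Sum.inl (0 : ZMod s) := by
      rw [zero_add, Vv_two_mul s s, ZMod.natCast_self]
    set c : (bipartiteGraph ({p : ZMod s × ZMod s | p.2 = p.1} ∪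
        {p : ZMod s × ZMod s | p.2 = p.1 + 1})).Walk (Sum.inl 0) (Sum.inl 0) :=
      (walkOf (Vv s) (adj_Vv s) 0 (2*s)).copy h0 hend with hc
    have hlen : c.length = 2*s := by rw [hc, Walk.length_copy, walkOf_length]
    have hedge : c.edges = (List.range (2*s)).map (fun i => s(Vv s i, Vv s (i+1))) := by
      rw [hc, Walk.edges_copy, walkOf_edges]
      simp only [zero_add]
    have hsup : c.support = (List.range (2*s+1)).map (fun i => Vv s i) := by
      rw [hc, Walk.support_copy, walkOf_support]
      simp only [zero_add]
    have hval : ∀ a : ZMod s, ((a.val : ℕ) : ZMod s) = a := fun a => by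
      simp [ZMod.natCast_val, ZMod.cast_id]
    refine ⟨Sum.inl 0, c, ?_, hlen, ?_⟩
    · rw [Walk.isCycle_def]
      refine ⟨?_, ?_, ?_⟩
      · rw [Walk.isTrail_def, hedge]
        refine List.Nodup.map_on ?_ List.nodup_range
        intro x hx y hy hxy
        rw [List.mem_range] at hx hy
        rw [Sym2.eq_iff] at hxy
        rcases hxy with ⟨h1, h2⟩ | ⟨h1, h2⟩
        · have := Vv_inj s (show x ≤ 2*s by omega) (show y ≤ 2*s by omega) h1
          omega
        · have e1 := Vv_inj s (show x ≤ 2*s by omega) (show y+1 ≤ 2*s by omega) h1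
          have e2 := Vv_inj s (show x+1 ≤ 2*s by omega) (show y ≤ 2*s by omega) h2
          omega
      · intro hnil
        rw [hnil] at hlen
        simp only [Walk.length_nil] at hlen
        omega
      · rw [hsup, List.range_succ_eq_map]
        simp only [List.map_cons, List.tail_cons, List.map_map]
        refine List.Nodup.map_on ?_ List.nodup_range
        intro x hx y hy hxy
        rw [List.mem_range] at hx hy
        simp only [Function.comp_apply, Nat.succ_eq_add_one] at hxy
        have := Vv_inj s (show x+1 ≤ 2*s by omega) (show y+1 ≤ 2*s by omega) hxy
        omega
    · -- edge coverage
      have hw : ∀ i, i < 2*s → s(Vv s i, Vv s (i+1)) ∈ c.edges := by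
        intro i hi
        rw [hedge]
        exact List.mem_map.mpr ⟨i, List.mem_range.mpr hi, rfl⟩
      have hoff : ∀ r : ZMod s, s(Sum.inl r, Sum.inr (r+1)) ∈ c.edges := by
        intro r
        have h1 : Vv s (2*r.val) = Sum.inl r := by rw [Vv_two_mul, hval]
        have h2 : Vv s (2*r.val+1) = Sum.inr (r+1) := by
          rw [Vv_two_mul_add_one]
          congr 1
          push_cast
          rw [hval]
        have := hw (2*r.val) (by have := ZMod.val_lt r; omega)
        rwa [h1, h2] at this
      have hdiag : ∀ r : ZMod s, s(Sum.inl r, Sum.inr r) ∈ c.edges := by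
        intro r
        have h1 : Vv s (2*(r-1).val+1) = Sum.inr r := by
          rw [Vv_two_mul_add_one]
          congr 1
          push_cast
          rw [hval]
          ring
        have h2 : Vv s (2*(r-1).val+1+1) = Sum.inl r := by
          rw [show 2*(r-1).val+1+1 = 2*((r-1).val+1) from by omega, Vv_two_mul]
          congr 1
          push_cast
          rw [hval]
          ring
        have := hw (2*(r-1).val+1) (by have := ZMod.val_lt (r-1); omega)
        rw [h1, h2] at this
        rwa [Sym2.eq_swap] at this
      intro e
      induction e using Sym2.ind with
      | _ x y =>
        constructor
        · intro he
          rw [SimpleGraph.mem_edgeSet] at he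
          obtain ⟨r, hcase⟩ := adj_cases s he
          rcases hcase with ⟨rfl, rfl⟩ | ⟨rfl, rfl⟩ | ⟨rfl, rfl⟩ | ⟨rfl, rfl⟩
          · exact hdiag r
          · exact hoff r
          · rw [Sym2.eq_swap]; exact hdiag r
          · rw [Sym2.eq_swap]; exact hoff r
        · exact fun he => c.edges_subset_edgeSet he
  · -- No short cycles
    rintro l hl2 hls ⟨v, c, hcyc, hlen⟩
    haveI : NeZero (2*s) := ⟨by omega⟩
    set k := 2*l with hk
    have hk4 : 4 ≤ k := by omega
    have hks : k < 2*s := by omega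
    have htailnodup := ((Walk.isCycle_def c).mp hcyc).2.2
    have hsupl : c.support.tail.length = k := by
      rw [List.length_tail, Walk.length_support, hlen]; omega
    have hgetTail : ∀ i, ∀ hi : i < c.support.tail.length,
        c.support.tail[i] = c.getVert (i+1) := by
      intro i hi
      rw [List.getElem_tail]
      exact walk_support_getElem c (i+1) (by rw [Walk.length_support, hlen]; rw [hsupl] at hi; omega)
    have hinj1 : ∀ a b, 1 ≤ a → a ≤ k → 1 ≤ b → b ≤ k →
        c.getVert a = c.getVert b → a = b := by
      intro a b ha1 ha2 hb1 hb2 h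
      have hia : a - 1 < c.support.tail.length := by rw [hsupl]; omega
      have hib : b - 1 < c.support.tail.length := by rw [hsupl]; omega
      have heq : c.support.tail[a-1] = c.support.tail[b-1] := by
        rw [hgetTail (a-1) hia, hgetTail (b-1) hib,
          show a - 1 + 1 = a from by omega, show b - 1 + 1 = b from by omega]
        exact h
      have := (htailnodup.getElem_inj_iff (hi := hia) (hj := hib)).mp heq
      omega
    have hv0 : c.getVert 0 = v := c.getVert_zero
    have hvk : c.getVert k = v := by rw [← hlen]; exact c.getVert_length
    have hget : ∀ a b, a ≤ k → b ≤ k → c.getVert a = c.getVert b →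
        a = b ∨ (a = 0 ∧ b = k) ∨ (a = k ∧ b = 0) := by
      intro a b ha hb h
      rcases Nat.eq_zero_or_pos a with rfl | ha1 <;> rcases Nat.eq_zero_or_pos b with rfl | hb1
      · left; rfl
      · have := hinj1 b k hb1 hb (by omega) le_rfl (h.symm.trans (hv0.trans hvk.symm))
        omega
      · have := hinj1 a k ha1 ha (by omega) le_rfl (h.trans (hv0.trans hvk.symm))
        omega
      · exact Or.inl (hinj1 a b ha1 ha hb1 hb h)
    set f : ℕ → ZMod (2*s) := fun p => gg s (c.getVert p) with hf
    have hstep : ∀ p, p < k → f (p+1) - f p = 1 ∨ f (p+1) - f p = -1 := by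
      intro p hp
      exact gg_adj hs (c.adj_getVert_succ (by rw [hlen]; omega))
    have hconst : ∀ p, p < k → f (p+1) - f p = f 1 - f 0 := by
      intro p
      induction p with
      | zero => intro _; rfl
      | succ p ih =>
        intro hp
        have h1 := ih (by omega)
        have hcontra : f (p+1+1) - f (p+1) = -(f (p+1) - f p) → False := by
          intro hcon
          have h4 : f (p+1+1) - f p = 0 := by
            have : f (p+1+1) - f p = (f (p+1+1) - f (p+1)) + (f (p+1) - f p) := by ring
            rw [this, hcon]
            ring
          have h5 := gg_inj hs (sub_eq_zero.mp h4)
          have := hget (p+1+1) p (by omega) (by omega) h5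
          omega
        rcases hstep p (by omega) with e1 | e1 <;> rcases hstep (p+1) hp with e2 | e2
        · rw [e2, ← h1, e1]
        · exact absurd (by rw [e1, e2]) hcontra
        · exact absurd (by rw [e1, e2]; ring) hcontra
        · rw [e2, ← h1, e1]
    have hsum : f k - f 0 = ∑ p ∈ Finset.range k, (f (p+1) - f p) :=
      (Finset.sum_range_sub f k).symm
    rw [Finset.sum_congr rfl (fun p hp => hconst p (Finset.mem_range.mp hp)),
      Finset.sum_const, Finset.card_range] at hsum
    have hzero : f k = f 0 := by
      rw [hf]
      simp only
      rw [hvk, hv0]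
    rw [hzero, sub_self] at hsum
    have hstep0 := hstep 0 (by omega)
    simp only [Nat.zero_add] at hstep0
    have hk0 : ((k : ℕ) : ZMod (2*s)) = 0 := by
      rcases hstep0 with e | e
      · rw [e] at hsum
        simpa using hsum.symm
      · rw [e] at hsum
        simpa using hsum.symm
    have hdvd := (ZMod.natCast_eq_zero_iff k (2*s)).mp hk0
    have := Nat.le_of_dvd (by omega) hdvd
    omega
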